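/- Let (Ω, ℙ) be a probability space, X̄ and n finite types, M ≥ 1 a natural number, and C : Fin M → Ω → X̄ measurable random variables that are pairwise independent and identically distributed with common law given by a probability mass function ν on X̄. Let f : X̄ → Matrix n n ℂ be such that f x is Hermitian for every x, and set F̄ := ∑_x (ν x) • f x. Then 𝔼_ℙ[ ‖ (1/M) ∑_{m : Fin M} f (C m) − F̄ ‖₁ ] ≤ Re Tr √( (1/M) • ( ∑_x (ν x) • (f x * f x) − F̄ * F̄ ) ), where the matrix ∑_x (ν x) • (f x * f x) − F̄ * F̄ is positive semidefinite and √ is its positive semidefinite square root. -/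

import Mathlib

open Matrix MeasureTheory ProbabilityTheory
open scoped ComplexOrder

/-- Positive semidefinite square root, extended to a total function
(it agrees with `Matrix.PosSemidef.sqrt` on positive semidefinite matrices). -/
noncomputable def psqrt {n : Type*} [Fintype n] [DecidableEq n] (A : Matrix n n ℂ) :
    Matrix n n ℂ :=
  open scoped Classical in
  if h : A.PosSemidef then
    h.1.eigenvectorUnitary.1 * diagonal ((↑) ∘ (√·) ∘ h.1.eigenvalues) *
      (star h.1.eigenvectorUnitary : Matrix n n ℂ)
  else 0

/-- The trace norm ‖A‖₁ = Re Tr √(AᴴA). -/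
noncomputable def traceNorm {n : Type*} [Fintype n] [DecidableEq n] (A : Matrix n n ℂ) : ℝ :=
  (psqrt (Aᴴ * A)).trace.re

/-- The square root of a positive semidefinite matrix (via `psqrt`). -/
noncomputable def Matrix.PosSemidef.sqrt {n : Type*} [Fintype n] [DecidableEq n]
    {A : Matrix n n ℂ} (_hA : A.PosSemidef) : Matrix n n ℂ :=
  psqrt A

lemma Matrix.PosSemidef.sqrt_mul_self {n : Type*} [Fintype n] [DecidableEq n]
    {A : Matrix n n ℂ} (hA : A.PosSemidef) : hA.sqrt * hA.sqrt = A := by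
  unfold Matrix.PosSemidef.sqrt psqrt
  rw [dif_pos hA]
  have hU : (star hA.1.eigenvectorUnitary : Matrix n n ℂ) * hA.1.eigenvectorUnitary.1 = 1 :=
    Unitary.coe_star_mul_self _
  conv_rhs => rw [hA.1.spectral_theorem]
  simp only [mul_assoc, Unitary.conjStarAlgAut_apply]
  rw [← mul_assoc (star hA.1.eigenvectorUnitary : Matrix n n ℂ), hU, one_mul,
    ← mul_assoc (diagonal _), diagonal_mul_diagonal]
  congr 2
  congr 1
  funext i
  show ((√(hA.1.eigenvalues i) : ℝ) : ℂ) * ((√(hA.1.eigenvalues i) : ℝ) : ℂ)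
    = ((hA.1.eigenvalues i : ℝ) : ℂ)
  rw [← Complex.ofReal_mul, Real.mul_self_sqrt (hA.eigenvalues_nonneg i)]

lemma Matrix.PosSemidef.posSemidef_sqrt {n : Type*} [Fintype n] [DecidableEq n]
    {A : Matrix n n ℂ} (hA : A.PosSemidef) : hA.sqrt.PosSemidef := by
  unfold Matrix.PosSemidef.sqrt psqrt
  rw [dif_pos hA]
  have hD : (diagonal ((↑) ∘ (√·) ∘ hA.1.eigenvalues : n → ℂ)).PosSemidef :=
    Matrix.PosSemidef.diagonal fun i => by
      simp only [Function.comp_apply, Pi.zero_apply]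
      exact_mod_cast Real.sqrt_nonneg _
  have := hD.conjTranspose_mul_mul_same (star hA.1.eigenvectorUnitary : Matrix n n ℂ)
  rwa [← Matrix.star_eq_conjTranspose, star_star] at this

section Aux

variable {n : Type*} [Fintype n] [DecidableEq n]

lemma psqrt_of_posSemidef {A : Matrix n n ℂ} (hA : A.PosSemidef) : psqrt A = hA.sqrt := by
  rfl

lemma psd_trace_re_nonneg {A : Matrix n n ℂ} (hA : A.PosSemidef) : 0 ≤ A.trace.re := by
  rw [Matrix.trace, Complex.re_sum]
  refine Finset.sum_nonneg fun i _ => ?_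
  have h := hA.dotProduct_mulVec_nonneg (Pi.single i 1)
  have hval : dotProduct (star (Pi.single i 1)) (A *ᵥ (Pi.single i 1)) = A i i := by
    simp [dotProduct, Matrix.mulVec, Pi.single_apply, Finset.mul_sum, apply_ite]
  rw [hval] at h
  exact (Complex.nonneg_iff.mp h).1

lemma psd_trace_mul_re_nonneg {P Q : Matrix n n ℂ} (hP : P.PosSemidef) (hQ : Q.PosSemidef) :
    0 ≤ (P * Q).trace.re := by
  have h1 : P * Q = P * hQ.sqrt * hQ.sqrt := by rw [mul_assoc, hQ.sqrt_mul_self]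
  have h2 : (P * hQ.sqrt * hQ.sqrt).trace = (hQ.sqrt * P * hQ.sqrt).trace :=
    Matrix.trace_mul_cycle P hQ.sqrt hQ.sqrt
  have hpsd : (hQ.sqrt * P * hQ.sqrt).PosSemidef := by
    have := hP.conjTranspose_mul_mul_same (B := hQ.sqrt)
    rwa [hQ.posSemidef_sqrt.isHermitian.eq] at this
  rw [h1, h2]
  exact psd_trace_re_nonneg hpsd

lemma psd_smul_real {c : ℝ} (hc : 0 ≤ c) {A : Matrix n n ℂ} (hA : A.PosSemidef) :
    (c • A).PosSemidef := by
  refine Matrix.PosSemidef.of_dotProduct_mulVec_nonneg ?_ ?_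
  · show (c • A)ᴴ = c • A
    rw [Matrix.conjTranspose_smul, star_trivial, hA.1.eq]
  · intro x
    have hx : (c • A) *ᵥ x = c • (A *ᵥ x) := smul_mulVec c A x
    rw [hx, dotProduct_smul, Complex.real_smul]
    have hc' : (0 : ℂ) ≤ (c : ℂ) := by
      rw [Complex.nonneg_iff]
      constructor <;> simp [hc]
    exact mul_nonneg hc' (hA.dotProduct_mulVec_nonneg x)

lemma psd_sum {ι : Type*} (s : Finset ι) (A : ι → Matrix n n ℂ)
    (h : ∀ i ∈ s, (A i).PosSemidef) : (∑ i ∈ s, A i).PosSemidef := by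
  classical
  induction s using Finset.induction with
  | empty => simpa using (Matrix.PosSemidef.zero (n := n) (R := ℂ))
  | @insert a s ha ih =>
    rw [Finset.sum_insert ha]
    exact (h a (Finset.mem_insert_self a s)).add (ih fun i hi => h i (Finset.mem_insert_of_mem hi))

/-- The key pointwise bound: for Hermitian `A` and positive definite `B`,
`‖A‖₁ ≤ (Tr B + Tr (B⁻¹ A²)) / 2`. -/
lemma traceNorm_le_of_posDef {A B : Matrix n n ℂ} (hA : A.IsHermitian) (hB : B.PosDef) :
    traceNorm A ≤ (B.trace.re + (B⁻¹ * (A * A)).trace.re) / 2 := by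
  have hAA : (A * A).PosSemidef := by
    have := Matrix.posSemidef_conjTranspose_mul_self A
    rwa [hA.eq] at this
  have hTN : traceNorm A = (psqrt (A * A)).trace.re := by rw [traceNorm, hA.eq]
  set R := psqrt (A * A) with hRdef
  have hR : R.PosSemidef := by rw [hRdef, psqrt_of_posSemidef hAA]; exact hAA.posSemidef_sqrt
  have hRR : R * R = A * A := by rw [hRdef, psqrt_of_posSemidef hAA]; exact hAA.sqrt_mul_self
  have hBunit : IsUnit B.det := isUnit_iff_ne_zero.mpr hB.det_pos.ne'
  have hBBi : B * B⁻¹ = 1 := Matrix.mul_nonsing_inv B hBunit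
  have hBiB : B⁻¹ * B = 1 := Matrix.nonsing_inv_mul B hBunit
  have hBi : (B⁻¹).PosSemidef := hB.inv.posSemidef
  have hXh : (R - B).IsHermitian := hR.1.sub hB.1
  have hpsd : ((R - B) * B⁻¹ * (R - B)).PosSemidef := by
    have := hBi.conjTranspose_mul_mul_same (B := R - B)
    rwa [hXh.eq] at this
  have h0 : 0 ≤ ((R - B) * B⁻¹ * (R - B)).trace.re := psd_trace_re_nonneg hpsd
  have hexp : (R - B) * B⁻¹ * (R - B) = R * B⁻¹ * R - R - R + B := by
    have e1 : R * B⁻¹ * B = R := by rw [mul_assoc, hBiB, mul_one]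
    have e2 : B * B⁻¹ * R = R := by rw [hBBi, one_mul]
    have e3 : B * B⁻¹ * B = B := by rw [hBBi, one_mul]
    rw [sub_mul, sub_mul, mul_sub, mul_sub, e1, e2, e3]
    abel
  have htrR : (R * B⁻¹ * R).trace = (B⁻¹ * (A * A)).trace := by
    rw [Matrix.trace_mul_cycle R B⁻¹ R, hRR, Matrix.trace_mul_comm]
  have htr : ((R - B) * B⁻¹ * (R - B)).trace.re
      = (B⁻¹ * (A * A)).trace.re - R.trace.re - R.trace.re + B.trace.re := by
    rw [hexp, Matrix.trace_add, Matrix.trace_sub, Matrix.trace_sub, htrR]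
    simp [Complex.add_re, Complex.sub_re]
  rw [htr] at h0
  rw [hTN]
  linarith

/-- The finite core of the second-moment bound. -/
lemma core_bound {ι : Type*} [Fintype ι] (p : ι → ℝ) (hp0 : ∀ v, 0 ≤ p v)
    (hp1 : ∑ v, p v = 1) (A : ι → Matrix n n ℂ) (hA : ∀ v, (A v).IsHermitian)
    {S : Matrix n n ℂ} (hS : S.PosSemidef)
    (hmom : ∑ v, p v • (A v * A v) = S) :
    ∑ v, p v * traceNorm (A v) ≤ (psqrt S).trace.re := by
  classical
  set d : ℝ := (Fintype.card n : ℝ) with hd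
  have hd0 : 0 ≤ d := by positivity
  set Q := psqrt S with hQdef
  have hQ : Q.PosSemidef := by rw [hQdef, psqrt_of_posSemidef hS]; exact hS.posSemidef_sqrt
  have hQQ : Q * Q = S := by rw [hQdef, psqrt_of_posSemidef hS]; exact hS.sqrt_mul_self
  have key : ∀ t : ℝ, 0 < t →
      ∑ v, p v * traceNorm (A v) ≤ Q.trace.re + t * d / 2 := by
    intro t ht
    set B := Q + (t : ℝ) • (1 : Matrix n n ℂ) with hBdef
    have ht1 : ((t : ℝ) • (1 : Matrix n n ℂ)).PosDef := by
      have : (t : ℝ) • (1 : Matrix n n ℂ) = Matrix.diagonal (fun _ => (t : ℂ)) := by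
        ext i j
        by_cases h : i = j <;>
          simp [h, Matrix.one_apply, Matrix.diagonal_apply, Complex.real_smul]
      rw [this]
      exact Matrix.PosDef.diagonal fun i => by positivity
    have hB : B.PosDef := Matrix.PosDef.posSemidef_add hQ ht1
    have hBunit : IsUnit B.det := isUnit_iff_ne_zero.mpr hB.det_pos.ne'
    have hBiB : B⁻¹ * B = 1 := Matrix.nonsing_inv_mul B hBunit
    -- trace of B
    have hTrB : B.trace.re = Q.trace.re + t * d := by
      rw [hBdef, Matrix.trace_add, Matrix.trace_smul, Matrix.trace_one]
      simp [Complex.add_re, Complex.smul_re, hd]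
    -- B⁻¹ * S bound
    have hBS : B⁻¹ * S = Q - t • (B⁻¹ * Q) := by
      have hBt : B - (t : ℝ) • (1 : Matrix n n ℂ) = Q := add_sub_cancel_right Q _
      calc B⁻¹ * S = B⁻¹ * ((B - (t : ℝ) • (1 : Matrix n n ℂ)) * Q) := by rw [hBt, hQQ]
        _ = B⁻¹ * (B * Q) - B⁻¹ * (t • Q) := by
            rw [sub_mul, mul_sub, smul_mul_assoc, one_mul]
        _ = Q - t • (B⁻¹ * Q) := by
            rw [← mul_assoc, hBiB, one_mul, mul_smul_comm]
    have hBSle : (B⁻¹ * S).trace.re ≤ Q.trace.re := by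
      have hnn : 0 ≤ (B⁻¹ * Q).trace.re := psd_trace_mul_re_nonneg hB.inv.posSemidef hQ
      rw [hBS, Matrix.trace_sub, Matrix.trace_smul]
      simp only [Complex.sub_re, Complex.smul_re, smul_eq_mul]
      nlinarith
    -- linearity
    have hlin : ∑ v, p v * ((B⁻¹ * (A v * A v)).trace.re) = (B⁻¹ * S).trace.re := by
      rw [← hmom, Finset.mul_sum, Matrix.trace_sum, Complex.re_sum]
      refine Finset.sum_congr rfl fun v _ => ?_
      rw [mul_smul_comm, Matrix.trace_smul, Complex.smul_re, smul_eq_mul]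
    calc ∑ v, p v * traceNorm (A v)
        ≤ ∑ v, p v * ((B.trace.re + (B⁻¹ * (A v * A v)).trace.re) / 2) := by
          refine Finset.sum_le_sum fun v _ => ?_
          exact mul_le_mul_of_nonneg_left (traceNorm_le_of_posDef (hA v) hB) (hp0 v)
      _ = ((∑ v, p v) * B.trace.re + ∑ v, p v * ((B⁻¹ * (A v * A v)).trace.re)) / 2 := by
          rw [Finset.sum_congr rfl fun v (_ : v ∈ Finset.univ) =>
            (by ring : p v * ((B.trace.re + (B⁻¹ * (A v * A v)).trace.re) / 2)
              = (p v * B.trace.re + p v * ((B⁻¹ * (A v * A v)).trace.re)) / 2)]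
          rw [← Finset.sum_div, Finset.sum_add_distrib, ← Finset.sum_mul]
      _ = (B.trace.re + (B⁻¹ * S).trace.re) / 2 := by rw [hp1, one_mul, hlin]
      _ ≤ ((Q.trace.re + t * d) + Q.trace.re) / 2 := by rw [hTrB]; linarith
      _ = Q.trace.re + t * d / 2 := by ring
  refine le_of_forall_pos_le_add fun ε hε => ?_
  have hden : (0 : ℝ) < d + 1 := by linarith
  have ht : 0 < 2 * ε / (d + 1) := by positivity
  refine (key _ ht).trans ?_
  have : 2 * ε / (d + 1) * d / 2 ≤ ε := by
    rw [div_mul_eq_mul_div, div_div, div_le_iff₀ (by positivity)]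
    nlinarith
  linarith

end Aux

/-- Second-moment trace-norm bound (eq. (25) in the paper's proof of its Covering Lemma):
for pairwise-independent, identically distributed Hermitian-matrix-valued samples, the
expected trace-norm deviation of the sample mean from the mean is at most
`Tr √((1/M)(E[f²] − (E[f])²))`; moreover `E[f²] − (E[f])²` is positive semidefinite. -/
theorem second_moment_trace_norm_bound
    {Xb : Type*} [Fintype Xb] [MeasurableSpace Xb] [MeasurableSingletonClass Xb]
    {n : Type*} [Fintype n] [DecidableEq n]
    {Ω : Type*} [MeasurableSpace Ω] (Pr : Measure Ω) [IsProbabilityMeasure Pr]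
    (M : ℕ) (hM : 1 ≤ M)
    (ν : Xb → ℝ) (hν0 : ∀ x, 0 ≤ ν x) (hν1 : ∑ x, ν x = 1)
    (C : Fin M → Ω → Xb) (hCmeas : ∀ m, Measurable (C m))
    (hlaw : ∀ m x, Pr {ω | C m ω = x} = ENNReal.ofReal (ν x))
    (hindep : ∀ m m', m ≠ m' → IndepFun (C m) (C m') Pr)
    (f : Xb → Matrix n n ℂ) (hf : ∀ x, (f x).IsHermitian) :
    ((∑ x, ν x • (f x * f x)) -
        (∑ x, ν x • f x) * (∑ x, ν x • f x)).PosSemidef ∧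
    ∫ ω, traceNorm ((1 / (M : ℝ)) • (∑ m : Fin M, f (C m ω)) - ∑ x, ν x • f x) ∂Pr ≤
      ((psqrt ((1 / (M : ℝ)) • ((∑ x, ν x • (f x * f x)) -
        (∑ x, ν x • f x) * (∑ x, ν x • f x)))).trace).re := by
  classical
  have hM0 : (M : ℝ) ≠ 0 := by positivity
  set F : Matrix n n ℂ := ∑ x, ν x • f x with hF
  set V : Matrix n n ℂ := (∑ x, ν x • (f x * f x)) - F * F with hV
  set g : Xb → Matrix n n ℂ := fun x => f x - F with hg
  have hermsum : ∀ (c : Xb → ℝ) (h : Xb → Matrix n n ℂ), (∀ x, (h x).IsHermitian) →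
      (∑ x, c x • h x).IsHermitian := by
    intro c h hh
    show (∑ x, c x • h x)ᴴ = ∑ x, c x • h x
    rw [Matrix.conjTranspose_sum]
    exact Finset.sum_congr rfl fun x _ => by
      rw [Matrix.conjTranspose_smul, star_trivial, (hh x).eq]
  have hFh : F.IsHermitian := hermsum ν f hf
  have hgh : ∀ x, (g x).IsHermitian := fun x => (hf x).sub hFh
  -- the centered mean vanishes
  have hZ : ∑ x, ν x • g x = 0 := by
    simp only [hg, smul_sub]
    rw [Finset.sum_sub_distrib, ← hF, ← Finset.sum_smul, hν1, one_smul, sub_self]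
  -- V as a sum of squares
  have hVsum : V = ∑ x, ν x • (g x * g x) := by
    have expand : ∀ x : Xb, ν x • (g x * g x)
        = ν x • (f x * f x) - ν x • (f x * F) - (ν x • F) * f x + ν x • (F * F) := by
      intro x
      simp only [hg, sub_mul, mul_sub, smul_sub, smul_mul_assoc]
      abel
    rw [Finset.sum_congr rfl fun x _ => expand x]
    rw [Finset.sum_add_distrib, Finset.sum_sub_distrib, Finset.sum_sub_distrib]
    have h1 : ∑ x, ν x • (f x * F) = F * F := by
      rw [Finset.sum_congr rfl fun x (_ : x ∈ Finset.univ) =>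
        (smul_mul_assoc (ν x) (f x) F).symm, ← Finset.sum_mul, ← hF]
    have h2 : ∑ x, (ν x • F) * f x = F * F := by
      rw [show (∑ x, (ν x • F) * f x) = ∑ x, ν x • (F * f x) from
        Finset.sum_congr rfl fun x _ => smul_mul_assoc _ _ _]
      rw [show (∑ x, ν x • (F * f x)) = ∑ x, F * (ν x • f x) from
        Finset.sum_congr rfl fun x _ => (mul_smul_comm _ _ _).symm]
      rw [← Finset.mul_sum, ← hF]
    have h3 : ∑ x, ν x • (F * F) = F * F := by
      rw [← Finset.sum_smul, hν1, one_smul]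
    rw [h1, h2, h3, hV]
    abel
  have hVpsd : V.PosSemidef := by
    rw [hVsum]
    refine psd_sum _ _ fun x _ => psd_smul_real (hν0 x) ?_
    have := Matrix.posSemidef_conjTranspose_mul_self (g x)
    rwa [(hgh x).eq] at this
  refine ⟨hVpsd, ?_⟩
  have hSpsd : ((1 / (M : ℝ)) • V).PosSemidef := psd_smul_real (by positivity) hVpsd
  -- set up the empirical distribution
  set φ : Ω → (Fin M → Xb) := fun ω m => C m ω with hφdef
  have hφ : Measurable φ := measurable_pi_iff.mpr hCmeas
  set p : (Fin M → Xb) → ℝ := fun v => (Pr (φ ⁻¹' {v})).toReal with hp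
  have hp0 : ∀ v, 0 ≤ p v := fun v => ENNReal.toReal_nonneg
  have hsum_p : ∀ s : Finset (Fin M → Xb), ∑ v ∈ s, p v = (Pr (φ ⁻¹' ↑s)).toReal := by
    intro s
    rw [hp, ← ENNReal.toReal_sum (fun a _ => measure_ne_top Pr _),
      sum_measure_preimage_singleton s (fun y _ => hφ (measurableSet_singleton y))]
  have hp1 : ∑ v, p v = 1 := by
    rw [hsum_p Finset.univ]
    simp
  -- marginals
  have hmarg1 : ∀ (m : Fin M) (x : Xb),
      ∑ v ∈ Finset.univ.filter (fun v => v m = x), p v = ν x := by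
    intro m x
    rw [hsum_p]
    have hpre : (φ ⁻¹' ↑(Finset.univ.filter (fun v : Fin M → Xb => v m = x)))
        = {ω | C m ω = x} := by
      ext ω
      simp [hφdef]
    rw [hpre, hlaw m x, ENNReal.toReal_ofReal (hν0 x)]
  have hmarg2 : ∀ (m m' : Fin M), m ≠ m' → ∀ (x y : Xb),
      ∑ v ∈ Finset.univ.filter (fun v => (v m, v m') = (x, y)), p v = ν x * ν y := by
    intro m m' hmm x y
    rw [hsum_p]
    have hpre : (φ ⁻¹' ↑(Finset.univ.filter (fun v : Fin M → Xb => (v m, v m') = (x, y))))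
        = (C m) ⁻¹' {x} ∩ (C m') ⁻¹' {y} := by
      ext ω
      simp [hφdef, Prod.ext_iff]
    rw [hpre, (hindep m m' hmm).measure_inter_preimage_eq_mul {x} {y}
      (measurableSet_singleton x) (measurableSet_singleton y)]
    have e1 : Pr ((C m) ⁻¹' {x}) = ENNReal.ofReal (ν x) := hlaw m x
    have e2 : Pr ((C m') ⁻¹' {y}) = ENNReal.ofReal (ν y) := hlaw m' y
    rw [e1, e2, ENNReal.toReal_mul, ENNReal.toReal_ofReal (hν0 x),
      ENNReal.toReal_ofReal (hν0 y)]
  -- the sample matrices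
  set A : (Fin M → Xb) → Matrix n n ℂ :=
    fun v => (1 / (M : ℝ)) • (∑ m : Fin M, f (v m)) - F with hA
  have hAherm : ∀ v, (A v).IsHermitian := by
    intro v
    refine Matrix.IsHermitian.sub ?_ hFh
    show ((1 / (M : ℝ)) • ∑ m : Fin M, f (v m))ᴴ = _
    rw [Matrix.conjTranspose_smul, star_trivial, Matrix.conjTranspose_sum]
    congr 1
    exact Finset.sum_congr rfl fun m _ => (hf (v m)).eq
  have hAg : ∀ v, A v = (1 / (M : ℝ)) • ∑ m : Fin M, g (v m) := by
    intro v
    simp only [hg]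
    rw [Finset.sum_sub_distrib, Finset.sum_const, Finset.card_univ, Fintype.card_fin,
      smul_sub, hA]
    congr 1
    rw [← Nat.cast_smul_eq_nsmul ℝ, smul_smul]
    rw [show (1 / (M : ℝ)) * M = 1 by field_simp, one_smul]
  -- group sums over fibers: diagonal terms
  have group1 : ∀ m : Fin M, ∑ v, p v • (g (v m) * g (v m)) = ∑ x, ν x • (g x * g x) := by
    intro m
    rw [← Finset.sum_fiberwise_of_maps_to (g := fun v : Fin M → Xb => v m)
      (fun v _ => Finset.mem_univ (v m)) (fun v => p v • (g (v m) * g (v m)))]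
    refine Finset.sum_congr rfl fun x _ => ?_
    rw [Finset.sum_congr rfl (fun v hv => by
      rw [(Finset.mem_filter.mp hv).2] :
      ∀ v ∈ Finset.univ.filter (fun v : Fin M → Xb => v m = x),
        p v • (g (v m) * g (v m)) = p v • (g x * g x))]
    rw [← Finset.sum_smul, hmarg1 m x]
  -- off-diagonal terms vanish
  have group2 : ∀ m m' : Fin M, m ≠ m' → ∑ v, p v • (g (v m) * g (v m')) = 0 := by
    intro m m' hmm
    rw [← Finset.sum_fiberwise_of_maps_to (g := fun v : Fin M → Xb => (v m, v m'))
      (fun v _ => Finset.mem_univ _) (fun v => p v • (g (v m) * g (v m')))]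
    have step : ∀ q : Xb × Xb,
        ∑ v ∈ Finset.univ.filter (fun v : Fin M → Xb => (v m, v m') = q),
          p v • (g (v m) * g (v m')) = (ν q.1 * ν q.2) • (g q.1 * g q.2) := by
      intro q
      rw [Finset.sum_congr rfl (fun v hv => by
        have h := (Finset.mem_filter.mp hv).2
        have h1 : v m = q.1 := congrArg Prod.fst h
        have h2 : v m' = q.2 := congrArg Prod.snd h
        rw [h1, h2] :
        ∀ v ∈ Finset.univ.filter (fun v : Fin M → Xb => (v m, v m') = q),
          p v • (g (v m) * g (v m')) = p v • (g q.1 * g q.2))]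
      rw [← Finset.sum_smul]
      congr 1
      have := hmarg2 m m' hmm q.1 q.2
      simpa using this
    rw [Finset.sum_congr rfl fun q _ => step q]
    rw [Fintype.sum_prod_type]
    have inner0 : ∀ x : Xb, ∑ y, (ν x * ν y) • (g x * g y) = 0 := by
      intro x
      have e : ∀ y, (ν x * ν y) • (g x * g y) = ν x • (ν y • (g x * g y)) := fun y =>
        mul_smul (ν x) (ν y) _
      rw [Finset.sum_congr rfl fun y _ => e y, ← Finset.smul_sum]
      have : ∑ y, ν y • (g x * g y) = g x * ∑ y, ν y • g y := by
        rw [Finset.mul_sum]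
        exact Finset.sum_congr rfl fun y _ => (mul_smul_comm _ _ _).symm
      rw [this, hZ, mul_zero, smul_zero]
    rw [Finset.sum_congr rfl fun x _ => inner0 x, Finset.sum_const, smul_zero]
  -- the moment identity
  have hmom : ∑ v, p v • (A v * A v) = (1 / (M : ℝ)) • V := by
    have hAvsq : ∀ v, A v * A v
        = ((1 / (M : ℝ)) * (1 / (M : ℝ))) • ∑ m, ∑ m', g (v m) * g (v m') := by
      intro v
      rw [hAg v, smul_mul_assoc, mul_smul_comm, smul_smul, Finset.sum_mul_sum]
    rw [Finset.sum_congr rfl fun v _ => by rw [hAvsq v, smul_comm]]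
    rw [← Finset.smul_sum]
    have swap : ∑ v, p v • (∑ m, ∑ m', g (v m) * g (v m'))
        = ∑ m, ∑ m' : Fin M, ∑ v, p v • (g (v m) * g (v m')) := by
      rw [Finset.sum_congr rfl fun v (_ : v ∈ Finset.univ) => Finset.smul_sum]
      rw [Finset.sum_comm]
      refine Finset.sum_congr rfl fun m _ => ?_
      rw [Finset.sum_congr rfl fun v (_ : v ∈ Finset.univ) => Finset.smul_sum]
      exact Finset.sum_comm
    rw [swap]
    have diag : ∀ m : Fin M, ∑ m' : Fin M, ∑ v, p v • (g (v m) * g (v m'))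
        = ∑ x, ν x • (g x * g x) := by
      intro m
      rw [show (∑ m' : Fin M, ∑ v, p v • (g (v m) * g (v m')))
          = ∑ m' : Fin M, if m = m' then ∑ x, ν x • (g x * g x) else 0 from
        Finset.sum_congr rfl fun m' _ => by
          by_cases h : m = m'
          · subst h; rw [if_pos rfl]; exact group1 m
          · rw [if_neg h]; exact group2 m m' h]
      rw [Finset.sum_ite_eq]
      simp
    rw [Finset.sum_congr rfl fun m _ => diag m, Finset.sum_const, Finset.card_univ,
      Fintype.card_fin, ← hVsum]
    rw [← Nat.cast_smul_eq_nsmul ℝ, smul_smul]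
    congr 1
    field_simp
  -- reduce the integral to a finite sum
  have hint : ∫ ω, traceNorm ((1 / (M : ℝ)) • (∑ m : Fin M, f (C m ω)) - F) ∂Pr
      = ∑ v, p v * traceNorm (A v) := by
    have heq : (fun ω => traceNorm ((1 / (M : ℝ)) • (∑ m : Fin M, f (C m ω)) - F))
        = fun ω => traceNorm (A (φ ω)) := rfl
    rw [heq]
    haveI : IsProbabilityMeasure (Pr.map φ) := Measure.isProbabilityMeasure_map hφ.aemeasurable
    rw [← MeasureTheory.integral_map hφ.aemeasurable
      (Measurable.of_discrete (f := fun v => traceNorm (A v))).aestronglyMeasurable]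
    rw [MeasureTheory.integral_fintype (Integrable.of_finite)]
    refine Finset.sum_congr rfl fun v _ => ?_
    rw [measureReal_def, Measure.map_apply hφ (measurableSet_singleton v), smul_eq_mul]
  rw [hint]
  exact core_bound p hp0 hp1 A hAherm hSpsd hmom
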